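/- Let n ≥ 1 and m ≥ 1 be integers and let j, α be real numbers with α − j > 0 and α > −n. Then ∫_{ℝ^{2n}} ∫_{ℝ^m} (1+|v|²)^j ((1+|v|²)² + 16|z|²)^{−(n+m+α)/2} dz dv = (π^{n+m/2}/4^m) · Γ(α−j) Γ((n+α)/2) / (Γ(n−j+α) Γ((n+m+α)/2)). -/

import Mathlib

open MeasureTheory Real Set intervalIntegral

lemma beta_real {a b : ℝ} (ha : 0 < a) (hb : 0 < b) :
    ∫ u in (0:ℝ)..1, u ^ (a-1) * (1-u) ^ (b-1) = Gamma a * Gamma b / Gamma (a+b) := by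
  have key : Complex.Gamma a * Complex.Gamma b
      = Complex.Gamma (a + b) * Complex.betaIntegral a b := by
    have := Complex.Gamma_mul_Gamma_eq_betaIntegral (s := (a:ℂ)) (t := (b:ℂ))
      (by simpa using ha) (by simpa using hb)
    simpa using this
  have hbeta : Complex.betaIntegral a b
      = ((∫ u in (0:ℝ)..1, u ^ (a-1) * (1-u) ^ (b-1) : ℝ) : ℂ) := by
    rw [Complex.betaIntegral, ← intervalIntegral.integral_ofReal]
    refine intervalIntegral.integral_congr fun x hx => ?_
    rw [uIcc_of_le zero_le_one] at hx
    rw [Complex.ofReal_mul, Complex.ofReal_cpow hx.1, Complex.ofReal_cpow (by linarith [hx.2] : (0:ℝ) ≤ 1 - x)]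
    push_cast
    ring
  have hG : Complex.Gamma ((a:ℂ) + b) ≠ 0 :=
    Complex.Gamma_ne_zero_of_re_pos (by simpa using by positivity)
  rw [hbeta] at key
  have : ((Gamma a * Gamma b / Gamma (a+b) : ℝ) : ℂ)
      = ((∫ u in (0:ℝ)..1, u ^ (a-1) * (1-u) ^ (b-1) : ℝ) : ℂ) := by
    push_cast
    rw [← Complex.Gamma_ofReal, ← Complex.Gamma_ofReal, ← Complex.Gamma_ofReal]
    push_cast
    field_simp at key ⊢
    linear_combination key
  exact_mod_cast this.symm


lemma image_phi : (fun u : ℝ => u / (1 - u)) '' Ioo 0 1 = Ioi 0 := by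
  ext t
  constructor
  · rintro ⟨u, ⟨hu0, hu1⟩, rfl⟩
    exact div_pos hu0 (by linarith)
  · intro ht
    refine ⟨t / (1 + t), ⟨div_pos ht (by linarith [ht.out]), ?_⟩, ?_⟩
    · rw [div_lt_one (by linarith [ht.out])]; linarith [ht.out]
    · have h1 : (0:ℝ) < 1 + t := by linarith [ht.out]
      show t / (1 + t) / (1 - t / (1 + t)) = t
      rw [show 1 - t / (1 + t) = 1 / (1 + t) by field_simp; ring]
      field_simp

lemma beta_Ioi {a b : ℝ} (ha : 0 < a) (hb : 0 < b) :
    ∫ t in Ioi (0:ℝ), t ^ (a-1) * (1+t) ^ (-(a+b)) = Gamma a * Gamma b / Gamma (a+b) := by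
  have hderiv : ∀ u ∈ Ioo (0:ℝ) 1, HasDerivWithinAt (fun u : ℝ => u / (1 - u))
      (((1 - u) ^ 2)⁻¹) (Ioo 0 1) u := by
    intro u hu
    have h1 : (1:ℝ) - u ≠ 0 := by have := hu.2; intro h; linarith [(by linarith : u = 1)]
    have := (hasDerivAt_id u).div ((hasDerivAt_id u).const_sub 1) h1
    refine this.hasDerivWithinAt.congr_deriv ?_
    simp only [id]; ring
  have hinj : InjOn (fun u : ℝ => u / (1 - u)) (Ioo 0 1) := by
    intro x hx y hy hxy
    have hx1 : (1:ℝ) - x > 0 := by linarith [hx.2]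
    have hy1 : (1:ℝ) - y > 0 := by linarith [hy.2]
    field_simp at hxy
    nlinarith
  have := integral_image_eq_integral_abs_deriv_smul (f' := fun u => ((1 - u) ^ 2)⁻¹)
    measurableSet_Ioo hderiv hinj (fun t => t ^ (a-1) * (1+t) ^ (-(a+b)))
  rw [image_phi] at this
  rw [this]
  rw [← beta_real ha hb, intervalIntegral.integral_of_le zero_le_one,
    integral_Ioc_eq_integral_Ioo]
  refine setIntegral_congr_fun measurableSet_Ioo fun u hu => ?_
  have hu0 : (0:ℝ) < u := hu.1
  have hu1 : (0:ℝ) < 1 - u := by linarith [hu.2]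
  have h1p : (1:ℝ) + u / (1 - u) = (1 - u)⁻¹ := by field_simp; ring
  rw [smul_eq_mul, h1p, abs_of_pos (by positivity), div_rpow hu0.le hu1.le,
    ← rpow_neg_one (1 - u)]
  have e1 : (((1-u):ℝ)^(2:ℕ))⁻¹ = (1-u)^(-2:ℝ) := by
    rw [← rpow_natCast (1-u) 2, ← rpow_neg hu1.le]; norm_num
  have e2 : (((1-u):ℝ)^(-1:ℝ))^(-(a+b)) = (1-u)^(a+b) := by
    rw [← rpow_mul hu1.le]; norm_num
  have e3 : (((1-u):ℝ)^(a-1))⁻¹ = (1-u)^(1-a) := by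
    rw [← rpow_neg hu1.le]; ring_nf
  have e4 : ((1-u):ℝ)^(-2:ℝ) * ((1-u)^(1-a) * (1-u)^(a+b)) = (1-u)^(b-1) := by
    rw [← rpow_add hu1, ← rpow_add hu1]; ring_nf
  rw [div_eq_mul_inv, e1, e2, e3]
  linear_combination (u ^ (a-1)) * e4

lemma integral_one_add_sq (d : ℕ) (hd : 1 ≤ d) {s : ℝ} (hs : (d:ℝ)/2 < s) :
    ∫ x : EuclideanSpace ℝ (Fin d), (1 + ‖x‖^2) ^ (-s) =
      π ^ ((d:ℝ)/2) * (Gamma (s - (d:ℝ)/2) / Gamma s) := by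
  have hd2 : (0:ℝ) < (d:ℝ)/2 := by
    have : (0:ℝ) < (d:ℝ) := by exact_mod_cast hd
    linarith
  haveI : Nonempty (Fin d) := ⟨⟨0, hd⟩⟩
  haveI : Nontrivial (EuclideanSpace ℝ (Fin d)) := inferInstance
  rw [MeasureTheory.integral_fun_norm_addHaar (volume) (fun y => (1 + y^2) ^ (-s)),
    measureReal_def, EuclideanSpace.volume_ball (Fin d) 0 1]
  simp only [finrank_euclideanSpace, Fintype.card_fin, ENNReal.ofReal_one, one_pow, one_mul,
    ENNReal.toReal_ofReal (by positivity : (0:ℝ) ≤ Real.sqrt π ^ d / Gamma ((d:ℝ)/2+1)),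
    smul_eq_mul, nsmul_eq_mul]
  have hrad : ∫ (y:ℝ) in Ioi 0, y ^ (d-1) * (1+y^2)^(-s) =
      (1/2) * ∫ t in Ioi (0:ℝ), t ^ ((d:ℝ)/2 - 1) * (1+t) ^ (-s) := by
    rw [← integral_comp_rpow_Ioi (fun t => t ^ ((d:ℝ)/2 - 1) * (1+t) ^ (-s)) (two_ne_zero),
      ← MeasureTheory.integral_const_mul]
    refine setIntegral_congr_fun measurableSet_Ioi fun y hy => ?_
    have hy0 : (0:ℝ) < y := hy
    have h2 : y ^ (2:ℝ) = y ^ (2:ℕ) := by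
      rw [show (2:ℝ) = ((2:ℕ):ℝ) by norm_num, rpow_natCast]
    have h3 : (y^(2:ℝ))^((d:ℝ)/2-1) = y^((d:ℝ)-2) := by
      rw [← rpow_mul hy0.le]; ring_nf
    have h4 : y^(d-1:ℕ) = y^((d:ℝ)-1) := by
      rw [← rpow_natCast y (d-1), Nat.cast_sub hd, Nat.cast_one]
    have h6 : y * y^((d:ℝ)-2) = y^((d:ℝ)-1) := by
      rw [show ((d:ℝ)-1) = 1 + ((d:ℝ)-2) by ring, rpow_add hy0, rpow_one]
    rw [smul_eq_mul, h3, h2, show (2:ℝ)-1 = (1:ℝ) by norm_num, rpow_one, abs_two, h4]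
    linear_combination (-((1+y^(2:ℕ))^(-s))) * h6
  have hbeta : ∫ t in Ioi (0:ℝ), t ^ ((d:ℝ)/2 - 1) * (1+t) ^ (-s)
      = Gamma ((d:ℝ)/2) * Gamma (s - (d:ℝ)/2) / Gamma s := by
    have := beta_Ioi (a := (d:ℝ)/2) (b := s - (d:ℝ)/2) hd2 (by linarith)
    rw [show (d:ℝ)/2 + (s - (d:ℝ)/2) = s by ring] at this
    exact this
  rw [hrad, hbeta]
  have hsqrt : Real.sqrt π ^ d = π ^ ((d:ℝ)/2) := by
    rw [sqrt_eq_rpow, ← rpow_natCast (π ^ ((1:ℝ)/2)) d, ← rpow_mul pi_pos.le]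
    congr 1; ring
  rw [hsqrt, Real.Gamma_add_one (ne_of_gt hd2)]
  have hG : Gamma ((d:ℝ)/2) ≠ 0 := (Real.Gamma_pos_of_pos hd2).ne'
  have hpi : π ^ ((d:ℝ)/2) ≠ 0 := by positivity
  have hGs : Gamma s ≠ 0 := (Real.Gamma_pos_of_pos (by linarith)).ne'
  field_simp

theorem stmt_0 (n m : ℕ) (hn : 1 ≤ n) (hm : 1 ≤ m) (j α : ℝ)
    (h1 : 0 < α - j) (h2 : -(n : ℝ) < α) :
    (∫ v : EuclideanSpace ℝ (Fin (2 * n)), ∫ z : EuclideanSpace ℝ (Fin m),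
        (1 + ‖v‖ ^ 2) ^ j *
          ((1 + ‖v‖ ^ 2) ^ 2 + 16 * ‖z‖ ^ 2) ^ (-(((n : ℝ) + m + α) / 2))) =
      π ^ ((n : ℝ) + (m : ℝ) / 2) / 4 ^ m *
        (Gamma (α - j) * Gamma (((n : ℝ) + α) / 2) /
          (Gamma ((n : ℝ) - j + α) * Gamma (((n : ℝ) + (m : ℝ) + α) / 2))) := by
  set s : ℝ := ((n : ℝ) + m + α) / 2 with hs_def
  have hs1 : (m:ℝ)/2 < s := by
    rw [hs_def]; have : (0:ℝ) < (n:ℝ) + α := by linarith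
    linarith
  have hGm := integral_one_add_sq m hm hs1
  -- inner integral
  have hinner : ∀ v : EuclideanSpace ℝ (Fin (2*n)),
      (∫ z : EuclideanSpace ℝ (Fin m),
        ((1 + ‖v‖ ^ 2) ^ 2 + 16 * ‖z‖ ^ 2) ^ (-s))
      = ((1 + ‖v‖^2) ^ (2:ℕ)) ^ (-s) * ((1 + ‖v‖^2)/4) ^ m
          * (π ^ ((m:ℝ)/2) * (Gamma (s - (m:ℝ)/2) / Gamma s)) := by
    intro v
    set A : ℝ := 1 + ‖v‖^2 with hA_def
    have hA : 0 < A := by positivity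
    have hpoint : ∀ z : EuclideanSpace ℝ (Fin m),
        (A ^ 2 + 16 * ‖z‖ ^ 2) ^ (-s)
          = (A ^ (2:ℕ)) ^ (-s) * (1 + ‖(4/A) • z‖ ^ 2) ^ (-s) := by
      intro z
      have hbase : A ^ 2 + 16 * ‖z‖ ^ 2 = A ^ (2:ℕ) * (1 + ‖(4/A) • z‖ ^ 2) := by
        rw [norm_smul, mul_pow, Real.norm_eq_abs, sq_abs, div_pow]
        field_simp
        ring
      rw [hbase, mul_rpow (by positivity) (by positivity)]
    calc ∫ z : EuclideanSpace ℝ (Fin m), (A ^ 2 + 16 * ‖z‖ ^ 2) ^ (-s)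
        = ∫ z : EuclideanSpace ℝ (Fin m),
            (A ^ (2:ℕ)) ^ (-s) * (1 + ‖(4/A) • z‖ ^ 2) ^ (-s) := by
          exact integral_congr_ae (Filter.Eventually.of_forall fun z => hpoint z)
      _ = (A ^ (2:ℕ)) ^ (-s) * ∫ z : EuclideanSpace ℝ (Fin m),
            (1 + ‖(4/A) • z‖ ^ 2) ^ (-s) := MeasureTheory.integral_const_mul _ _
      _ = (A ^ (2:ℕ)) ^ (-s) * (|((4/A) ^ (Module.finrank ℝ (EuclideanSpace ℝ (Fin m))))⁻¹|
            • ∫ z : EuclideanSpace ℝ (Fin m), (1 + ‖z‖ ^ 2) ^ (-s)) := by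
          rw [MeasureTheory.Measure.integral_comp_smul volume
            (fun z : EuclideanSpace ℝ (Fin m) => (1 + ‖z‖ ^ 2) ^ (-s)) (4/A)]
      _ = (A ^ (2:ℕ)) ^ (-s) * ((A/4) ^ m
            * (π ^ ((m:ℝ)/2) * (Gamma (s - (m:ℝ)/2) / Gamma s))) := by
          rw [hGm, finrank_euclideanSpace, Fintype.card_fin, smul_eq_mul]
          congr 2
          rw [abs_of_pos (by positivity), ← inv_pow, inv_div]
      _ = (A ^ (2:ℕ)) ^ (-s) * (A/4) ^ m
            * (π ^ ((m:ℝ)/2) * (Gamma (s - (m:ℝ)/2) / Gamma s)) := by ring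
  set Gm : ℝ := π ^ ((m:ℝ)/2) * (Gamma (s - (m:ℝ)/2) / Gamma s) with hGm_def
  set t : ℝ := (n:ℝ) + α - j with ht_def
  have h2n : 1 ≤ 2 * n := by omega
  have ht1 : ((2*n : ℕ):ℝ)/2 < t := by
    push_cast; rw [ht_def]; linarith
  have hG2n := integral_one_add_sq (2*n) h2n ht1
  have houter : ∀ v : EuclideanSpace ℝ (Fin (2*n)),
      (1 + ‖v‖ ^ 2) ^ j * (((1 + ‖v‖^2) ^ (2:ℕ)) ^ (-s) * ((1 + ‖v‖^2)/4) ^ m * Gm)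
        = (Gm / 4 ^ m) * (1 + ‖v‖ ^ 2) ^ (-t) := by
    intro v
    set A : ℝ := 1 + ‖v‖^2 with hA_def
    have hA : 0 < A := by positivity
    have e1 : (A ^ (2:ℕ)) ^ (-s) = A ^ (-(2*s)) := by
      rw [← rpow_natCast A 2, ← rpow_mul hA.le]
      norm_num
    have e2 : (A/4) ^ m = A ^ ((m:ℝ)) / 4 ^ m := by
      rw [div_pow, rpow_natCast]
    have e3 : A ^ j * A ^ (-(2*s)) * A ^ ((m:ℝ)) = A ^ (-t) := by
      rw [← rpow_add hA, ← rpow_add hA]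
      congr 1
      rw [hs_def, ht_def]
      ring
    rw [e1, e2]
    calc A ^ j * (A ^ (-(2*s)) * (A ^ ((m:ℝ)) / 4 ^ m) * Gm)
        = (A ^ j * A ^ (-(2*s)) * A ^ ((m:ℝ))) * Gm / 4 ^ m := by ring
      _ = (Gm / 4 ^ m) * A ^ (-t) := by rw [e3]; ring
  calc (∫ v : EuclideanSpace ℝ (Fin (2 * n)), ∫ z : EuclideanSpace ℝ (Fin m),
        (1 + ‖v‖ ^ 2) ^ j * ((1 + ‖v‖ ^ 2) ^ 2 + 16 * ‖z‖ ^ 2) ^ (-s))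
      = ∫ v : EuclideanSpace ℝ (Fin (2 * n)), (Gm / 4 ^ m) * (1 + ‖v‖ ^ 2) ^ (-t) := by
        refine integral_congr_ae (Filter.Eventually.of_forall fun v => ?_)
        show (∫ z : EuclideanSpace ℝ (Fin m),
            (1 + ‖v‖ ^ 2) ^ j * ((1 + ‖v‖ ^ 2) ^ 2 + 16 * ‖z‖ ^ 2) ^ (-s)) = _
        rw [MeasureTheory.integral_const_mul, hinner v]; exact houter v
    _ = (Gm / 4 ^ m) * ∫ v : EuclideanSpace ℝ (Fin (2 * n)), (1 + ‖v‖ ^ 2) ^ (-t) :=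
        MeasureTheory.integral_const_mul _ _
    _ = (Gm / 4 ^ m) * (π ^ (((2*n:ℕ):ℝ)/2) * (Gamma (t - ((2*n:ℕ):ℝ)/2) / Gamma t)) := by
        rw [hG2n]
    _ = π ^ ((n : ℝ) + (m : ℝ) / 2) / 4 ^ m *
        (Gamma (α - j) * Gamma (((n : ℝ) + α) / 2) /
          (Gamma ((n : ℝ) - j + α) * Gamma (((n : ℝ) + (m : ℝ) + α) / 2))) := by
        rw [hGm_def, ht_def, hs_def]
        rw [show ((2*n:ℕ):ℝ)/2 = (n:ℝ) by push_cast; ring]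
        rw [show (n:ℝ) + α - j - (n:ℝ) = α - j by ring]
        rw [show ((n:ℝ) + (m:ℝ) + α)/2 - (m:ℝ)/2 = ((n:ℝ) + α)/2 by ring]
        rw [show (n:ℝ) + α - j = (n:ℝ) - j + α by ring]
        rw [show (n:ℝ) + (m:ℝ)/2 = (m:ℝ)/2 + (n:ℝ) by ring, rpow_add pi_pos]
        ring
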